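/- Let V be a finite-dimensional Euclidean space of dimension n ≥ 1, and suppose (u_1,...,u_n) and (v_1,...,v_n) are ordered orthonormal bases of V determining the same maximal pointed convex cone D = {Σ c_i u_i : c_m < 0, m = max{i : c_i ≠ 0}} ∪ {0} = {Σ c_i v_i : c_m < 0, m = max{i : c_i ≠ 0}} ∪ {0}. Then u_i = v_i for all i. -/

import Mathlib

open Set

noncomputable section

def IsCone {V : Type*} [AddCommGroup V] [Module ℝ V] (C : Set V) : Prop :=
  (0 : V) ∈ C ∧ ∀ r : ℝ, 0 ≤ r → ∀ v ∈ C, r • v ∈ C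

def IsConvexCone {V : Type*} [AddCommGroup V] [Module ℝ V] (C : Set V) : Prop :=
  IsCone C ∧ ∀ u ∈ C, ∀ v ∈ C, u + v ∈ C

def IsMaxPointedCone {V : Type*} [AddCommGroup V] [Module ℝ V] (D : Set V) : Prop :=
  IsConvexCone D ∧ D ∩ (-D) = {0} ∧ D ∪ (-D) = Set.univ

def hatCone {V : Type*} [AddCommGroup V] [Module ℝ V] (X : Set V) : Set V :=
  {0} ∪ {v | ∃ r : ℝ, 0 ≤ r ∧ ∃ x ∈ X, v = r • x}

def sphereN (n : ℕ) : Set (EuclideanSpace ℝ (Fin (n + 1))) := Metric.sphere 0 1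

def PhiPlus (n : ℕ) : Set (EuclideanSpace ℝ (Fin (n + 1))) :=
  {x | x ∈ sphereN n ∧ ∃ m : Fin (n + 1), 0 < x m ∧ ∀ i, m < i → x i = 0}

def PhiMinus (n : ℕ) : Set (EuclideanSpace ℝ (Fin (n + 1))) := {x | -x ∈ PhiPlus n}

def Ln (n : ℕ) : Set (Set (EuclideanSpace ℝ (Fin (n + 1)))) :=
  {X | ∃ D, IsMaxPointedCone D ∧ X = D ∩ PhiPlus n}

def coneOfBasis {V : Type*} [AddCommGroup V] [Module ℝ V] {n : ℕ}
    (v : Fin n → V) : Set V :=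
  {0} ∪ {x | ∃ c : Fin n → ℝ, x = ∑ i, c i • v i ∧
    ∃ m, c m < 0 ∧ ∀ i, m < i → c i = 0}

open scoped InnerProductSpace
open Module

section Aux

variable {V : Type*} [NormedAddCommGroup V] [InnerProductSpace ℝ V]

lemma repr_sum {n : ℕ} (u : OrthonormalBasis (Fin n) ℝ V) (c : Fin n → ℝ) (j : Fin n) :
    u.repr (∑ i, c i • u i) j = c j := by
  rw [u.repr_apply_apply, inner_sum]
  simp only [real_inner_smul_right]
  rw [Finset.sum_eq_single j]
  · simp [orthonormal_iff_ite.mp u.orthonormal]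
  · intro i _ hij
    simp [orthonormal_iff_ite.mp u.orthonormal, hij.symm]
  · simp

lemma mem_cone_iff {n : ℕ} (u : OrthonormalBasis (Fin n) ℝ V) (x : V) :
    x ∈ coneOfBasis ⇑u ↔ x = 0 ∨ ∃ m, u.repr x m < 0 ∧ ∀ i, m < i → u.repr x i = 0 := by
  constructor
  · rintro (h0 | ⟨c, rfl, m, hm, hm'⟩)
    · exact Or.inl h0
    · exact Or.inr ⟨m, by rw [repr_sum]; exact hm,
        fun i hi => by rw [repr_sum]; exact hm' i hi⟩
  · rintro (rfl | ⟨m, hm, hm'⟩)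
    · exact Or.inl rfl
    · exact Or.inr ⟨fun i => u.repr x i, (u.sum_repr x).symm, m, hm, hm'⟩

lemma core_iff {n : ℕ} (u : OrthonormalBasis (Fin (n + 1)) ℝ V) (x : V) :
    (∀ z : V, ∃ ε : ℝ, 0 < ε ∧ x + ε • z ∈ coneOfBasis ⇑u) ↔
      u.repr x (Fin.last n) < 0 := by
  constructor
  · intro hc
    obtain ⟨ε, hε, hmem⟩ := hc (u (Fin.last n))
    have hrepr : ∀ i, u.repr (x + ε • u (Fin.last n)) i
        = u.repr x i + ε * (if i = Fin.last n then 1 else 0) := by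
      intro i
      rw [u.repr_apply_apply, u.repr_apply_apply, inner_add_right, real_inner_smul_right,
        orthonormal_iff_ite.mp u.orthonormal]
    rw [mem_cone_iff] at hmem
    rcases hmem with h0 | ⟨m, hm, hm'⟩
    · have : u.repr (x + ε • u (Fin.last n)) (Fin.last n) = 0 := by rw [h0]; simp
      rw [hrepr] at this; simp at this; linarith
    · rcases lt_or_eq_of_le (Fin.le_last m) with hml | hml
      · have := hm' (Fin.last n) hml
        rw [hrepr] at this; simp at this; linarith
      · rw [hml, hrepr] at hm; simp at hm; linarith
  · intro hx z
    set t := u.repr z (Fin.last n) with ht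
    have habs : (0:ℝ) < |t| + 1 := by positivity
    refine ⟨(-u.repr x (Fin.last n)) / (|t| + 1), div_pos (by linarith) habs, ?_⟩
    rw [mem_cone_iff]
    refine Or.inr ⟨Fin.last n, ?_, fun i hi => absurd hi (not_lt.mpr (Fin.le_last i))⟩
    have hrepr : u.repr (x + ((-u.repr x (Fin.last n)) / (|t| + 1)) • z) (Fin.last n)
        = u.repr x (Fin.last n) + (-u.repr x (Fin.last n)) / (|t| + 1) * t := by
      rw [map_add, map_smul]
      simp [PiLp.add_apply, PiLp.smul_apply, smul_eq_mul, ← ht]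
    rw [hrepr]
    have h1 : (-u.repr x (Fin.last n)) / (|t| + 1) * t
        ≤ (-u.repr x (Fin.last n)) / (|t| + 1) * |t| := by
      exact mul_le_mul_of_nonneg_left (le_abs_self t) (le_of_lt (div_pos (by linarith) habs))
    have h2 : (-u.repr x (Fin.last n)) / (|t| + 1) * |t|
        < (-u.repr x (Fin.last n)) / (|t| + 1) * (|t| + 1) := by
      exact mul_lt_mul_of_pos_left (by linarith) (div_pos (by linarith) habs)
    have h3 : (-u.repr x (Fin.last n)) / (|t| + 1) * (|t| + 1) = -u.repr x (Fin.last n) := by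
      field_simp
    linarith

lemma halfspace_eq {a b : V} (ha : ‖a‖ = 1) (hb : ‖b‖ = 1)
    (h : ∀ x : V, ⟪a, x⟫_ℝ < 0 ↔ ⟪b, x⟫_ℝ < 0) : a = b := by
  have h0 : ∀ x : V, ⟪a, x⟫_ℝ = 0 → ⟪b, x⟫_ℝ = 0 := by
    intro x hx
    have h1 := h x
    have h2 := h (-x)
    rw [inner_neg_right, inner_neg_right, hx] at h2
    rw [hx] at h1
    simp only [neg_zero] at h1 h2
    by_contra hne
    rcases lt_or_gt_of_ne hne with hlt | hlt
    · exact absurd (h1.mpr hlt) (lt_irrefl 0)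
    · exact absurd (h2.mpr (by linarith)) (lt_irrefl 0)
  have haa : ⟪a, a⟫_ℝ = 1 := by rw [real_inner_self_eq_norm_sq, ha]; norm_num
  have hbb : ⟪b, b⟫_ℝ = 1 := by rw [real_inner_self_eq_norm_sq, hb]; norm_num
  have hab : ⟪b, a⟫_ℝ = ⟪a, b⟫_ℝ := real_inner_comm a b
  have hxa : ⟪a, ⟪a, b⟫_ℝ • a - b⟫_ℝ = 0 := by
    rw [inner_sub_right, real_inner_smul_right, haa]; ring
  have hxb := h0 _ hxa
  rw [inner_sub_right, real_inner_smul_right, hbb, hab] at hxb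
  have htpos : 0 < ⟪a, b⟫_ℝ := by
    have h1 := (h (-a)).mp (by rw [inner_neg_right, haa]; norm_num)
    rw [inner_neg_right, hab] at h1
    linarith
  have ht1 : ⟪a, b⟫_ℝ = 1 := by nlinarith
  have hz : ⟪a - b, a - b⟫_ℝ = 0 := by
    rw [inner_sub_left, inner_sub_right, inner_sub_right, haa, hbb, hab, ht1]
    ring
  exact sub_eq_zero.mp (inner_self_eq_zero.mp hz)

end Aux

section Main

variable {V : Type*} [NormedAddCommGroup V] [InnerProductSpace ℝ V]

lemma cone_restrict {n : ℕ} (u : OrthonormalBasis (Fin (n + 1)) ℝ V) {W : Submodule ℝ V}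
    (u' : OrthonormalBasis (Fin n) ℝ W)
    (hcoe : ∀ i, (u' i : V) = u i.castSucc)
    (hlast : ∀ x : W, u.repr x (Fin.last n) = 0)
    (x : W) : x ∈ coneOfBasis ⇑u' ↔ (x : V) ∈ coneOfBasis ⇑u := by
  rw [mem_cone_iff, mem_cone_iff]
  have hrepr : ∀ i : Fin n, u'.repr x i = u.repr (x : V) i.castSucc := by
    intro i
    rw [u'.repr_apply_apply, u.repr_apply_apply, Submodule.coe_inner, hcoe]
  constructor
  · rintro (rfl | ⟨m, hm, hm'⟩)
    · exact Or.inl (by simp)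
    · refine Or.inr ⟨m.castSucc, by rw [← hrepr]; exact hm, ?_⟩
      intro i hi
      induction i using Fin.lastCases with
      | last => exact hlast x
      | cast j =>
        rw [← hrepr]
        exact hm' j (Fin.castSucc_lt_castSucc_iff.mp hi)
  · rintro (h0 | ⟨m, hm, hm'⟩)
    · exact Or.inl (Subtype.ext h0)
    · have hmne : m ≠ Fin.last n := by
        intro e; rw [e, hlast x] at hm; exact lt_irrefl 0 hm
      refine Or.inr ⟨m.castPred hmne, ?_, ?_⟩
      · rw [hrepr, Fin.castSucc_castPred]; exact hm
      · intro i hi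
        rw [hrepr]
        apply hm'
        rw [← Fin.castSucc_castPred m hmne]
        exact Fin.castSucc_lt_castSucc_iff.mpr hi

end Main

universe u

lemma key : ∀ (n : ℕ) (V : Type u) [NormedAddCommGroup V] [InnerProductSpace ℝ V]
    (u v : OrthonormalBasis (Fin n) ℝ V),
    coneOfBasis ⇑u = coneOfBasis ⇑v → ∀ i, u i = v i := by
  intro n
  induction n with
  | zero => intro V _ _ u v _ i; exact i.elim0
  | succ n ih =>
    intro V _ _ u v h
    have hlast : u (Fin.last n) = v (Fin.last n) := by
      apply halfspace_eq (u.orthonormal.1 _) (v.orthonormal.1 _)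
      intro x
      rw [← u.repr_apply_apply, ← v.repr_apply_apply, ← core_iff u x, ← core_iff v x, h]
    haveI : FiniteDimensional ℝ V := Module.Finite.of_basis u.toBasis
    have hdim : Module.finrank ℝ V = n + 1 := by
      rw [Module.finrank_eq_card_basis u.toBasis, Fintype.card_fin]
    haveI : Fact (Module.finrank ℝ V = n + 1) := ⟨hdim⟩
    have hne : u (Fin.last n) ≠ 0 := by
      intro h0
      have h1 := u.orthonormal.1 (Fin.last n)
      rw [h0] at h1; simp at h1
    set W := (ℝ ∙ u (Fin.last n))ᗮ with hWdef
    have hWrank : Module.finrank ℝ W = n := Submodule.finrank_orthogonal_span_singleton hne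
    have hinnerU : ∀ i : Fin n, ⟪u (Fin.last n), u i.castSucc⟫_ℝ = 0 := by
      intro i
      rw [orthonormal_iff_ite.mp u.orthonormal]
      simp [(Fin.castSucc_lt_last i).ne']
    have hinnerV : ∀ i : Fin n, ⟪u (Fin.last n), v i.castSucc⟫_ℝ = 0 := by
      intro i
      rw [hlast, orthonormal_iff_ite.mp v.orthonormal]
      simp [(Fin.castSucc_lt_last i).ne']
    have hmemU : ∀ i : Fin n, u i.castSucc ∈ W := fun i =>
      Submodule.mem_orthogonal_singleton_iff_inner_right.mpr (hinnerU i)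
    have hmemV : ∀ i : Fin n, v i.castSucc ∈ W := fun i =>
      Submodule.mem_orthogonal_singleton_iff_inner_right.mpr (hinnerV i)
    have hlastzero : ∀ x : W, u.repr (x : V) (Fin.last n) = 0 := by
      intro x
      rw [u.repr_apply_apply]
      exact Submodule.mem_orthogonal_singleton_iff_inner_right.mp x.2
    have hlastzeroV : ∀ x : W, v.repr (x : V) (Fin.last n) = 0 := by
      intro x
      rw [v.repr_apply_apply, ← hlast]
      exact Submodule.mem_orthogonal_singleton_iff_inner_right.mp x.2
    have honU : Orthonormal ℝ (fun i : Fin n => (⟨u i.castSucc, hmemU i⟩ : W)) := by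
      rw [orthonormal_iff_ite]
      intro i j
      have h1 := orthonormal_iff_ite.mp u.orthonormal i.castSucc j.castSucc
      rw [Submodule.coe_inner]
      simpa [Fin.castSucc_inj] using h1
    have honV : Orthonormal ℝ (fun i : Fin n => (⟨v i.castSucc, hmemV i⟩ : W)) := by
      rw [orthonormal_iff_ite]
      intro i j
      have h1 := orthonormal_iff_ite.mp v.orthonormal i.castSucc j.castSucc
      rw [Submodule.coe_inner]
      simpa [Fin.castSucc_inj] using h1
    have hspanU : ⊤ ≤ Submodule.span ℝ
        (Set.range (fun i : Fin n => (⟨u i.castSucc, hmemU i⟩ : W))) :=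
      le_of_eq (honU.linearIndependent.span_eq_top_of_card_eq_finrank'
        (by simp [hWrank])).symm
    have hspanV : ⊤ ≤ Submodule.span ℝ
        (Set.range (fun i : Fin n => (⟨v i.castSucc, hmemV i⟩ : W))) :=
      le_of_eq (honV.linearIndependent.span_eq_top_of_card_eq_finrank'
        (by simp [hWrank])).symm
    let u' : OrthonormalBasis (Fin n) ℝ W := OrthonormalBasis.mk honU hspanU
    let v' : OrthonormalBasis (Fin n) ℝ W := OrthonormalBasis.mk honV hspanV
    have hu'coe : ∀ i, ((u' i : W) : V) = u i.castSucc := by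
      intro i
      show (((OrthonormalBasis.mk honU hspanU) i : W) : V) = u i.castSucc
      rw [OrthonormalBasis.coe_mk]
    have hv'coe : ∀ i, ((v' i : W) : V) = v i.castSucc := by
      intro i
      show (((OrthonormalBasis.mk honV hspanV) i : W) : V) = v i.castSucc
      rw [OrthonormalBasis.coe_mk]
    have h' : coneOfBasis ⇑u' = coneOfBasis ⇑v' := by
      ext x
      rw [cone_restrict u u' hu'coe hlastzero x, cone_restrict v v' hv'coe hlastzeroV x, h]
    have hall := ih W u' v' h'
    intro i
    induction i using Fin.lastCases with
    | last => exact hlast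
    | cast j =>
      have h1 := congrArg (Subtype.val) (hall j)
      rwa [hu'coe, hv'coe] at h1


theorem stmt10 {V : Type*} [NormedAddCommGroup V] [InnerProductSpace ℝ V]
    [FiniteDimensional ℝ V] (n : ℕ) (hn : 1 ≤ n) (hV : Module.finrank ℝ V = n)
    (u v : OrthonormalBasis (Fin n) ℝ V)
    (h : coneOfBasis ⇑u = coneOfBasis ⇑v) :
    ∀ i, u i = v i :=
  key n V u v h
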